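/- Let X₁, X₂ and Y be Banach spaces, let X = X₁ ⊕_1 X₂, and let T : X → Y be a bounded linear operator. If T is a narrow operator, then the restrictions T₁ and T₂ of T to X₁ and X₂ are narrow operators. -/

import Mathlib

/-- A bounded linear operator `T : X → Y` is *narrow* if for every `x, y` in the unit
sphere of `X`, every continuous linear functional `f` on `X` and every `ε > 0` there is
`z` in the unit sphere with `‖x + z‖ ≥ 2 - ε` and `‖T (y - z)‖ + |f (y - z)| ≤ ε`. -/
def IsNarrow {X Y : Type*} [NormedAddCommGroup X] [NormedSpace ℝ X]
    [NormedAddCommGroup Y] [NormedSpace ℝ Y] (T : X →L[ℝ] Y) : Prop :=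
  ∀ x y : X, ‖x‖ = 1 → ‖y‖ = 1 → ∀ f : X →L[ℝ] ℝ, ∀ ε : ℝ, 0 < ε →
    ∃ z : X, ‖z‖ = 1 ∧ 2 - ε ≤ ‖x + z‖ ∧ ‖T (y - z)‖ + |f (y - z)| ≤ ε

section Aux

variable {X X₁ Y : Type*}
    [NormedAddCommGroup X] [NormedSpace ℝ X]
    [NormedAddCommGroup X₁] [NormedSpace ℝ X₁]
    [NormedAddCommGroup Y] [NormedSpace ℝ Y]

/-- One application of narrowness of `T`, with the functional `λ • g∘π + f∘π` where `g`
norms `y` and `λ` is huge: this forces the component of `z` outside of `J(X₁)` to be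
`δ`-small, and gives a one-sided bound on `f (y - π z)`. -/
lemma narrow_step (T : X →L[ℝ] Y) (J : X₁ →L[ℝ] X) (π : X →L[ℝ] X₁)
    (hJ : ∀ a, ‖J a‖ = ‖a‖) (hπJ : ∀ a, π (J a) = a)
    (hsplit : ∀ u, ‖u‖ = ‖π u‖ + ‖u - J (π u)‖)
    (hT : IsNarrow T) (xx : X) (hxx : ‖xx‖ = 1)
    (y : X₁) (hy : ‖y‖ = 1) (g : X₁ →L[ℝ] ℝ) (hg1 : ‖g‖ = 1) (hgy : g y = 1)
    (f : X₁ →L[ℝ] ℝ) (δ : ℝ) (hδpos : 0 < δ) :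
    ∃ z : X, ‖z‖ = 1 ∧ 2 - δ ≤ ‖xx + z‖ ∧ 1 - g (π z) ≤ δ ∧ ‖z - J (π z)‖ ≤ δ ∧
      f (y - π z) ≤ δ ∧ ‖T (J (y - π z))‖ ≤ δ + ‖T‖ * δ := by
  set lr : ℝ := (δ + 2 * ‖f‖) / δ with hlr
  have hlrpos : 0 < lr := div_pos (by linarith [norm_nonneg f]) hδpos
  set F : X →L[ℝ] ℝ := lr • (g.comp π) + f.comp π with hF
  have hJy : ‖J y‖ = 1 := by rw [hJ, hy]
  obtain ⟨z, hz1, hzx, hzT⟩ := hT xx (J y) hxx hJy F δ hδpos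
  have hTz : ‖T (J y - z)‖ ≤ δ := by
    have := abs_nonneg (F (J y - z)); linarith
  have hFz : |F (J y - z)| ≤ δ := by
    have := norm_nonneg (T (J y - z)); linarith
  have hπJyz : π (J y - z) = y - π z := by rw [map_sub, hπJ]
  have hFval : F (J y - z) = lr * (1 - g (π z)) + f (y - π z) := by
    simp only [hF, ContinuousLinearMap.add_apply, ContinuousLinearMap.smul_apply,
      ContinuousLinearMap.comp_apply, smul_eq_mul, hπJyz]
    rw [map_sub g, hgy]
  rw [hFval] at hFz
  have hFz' := abs_le.mp hFz
  -- basic norm facts about z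
  have hsz := hsplit z
  have hsz1 : ‖π z‖ + ‖z - J (π z)‖ = 1 := by rw [← hsz, hz1]
  have hπz1 : ‖π z‖ ≤ 1 := by
    have := norm_nonneg (z - J (π z)); linarith
  have hgπz : g (π z) ≤ ‖π z‖ := by
    calc g (π z) ≤ |g (π z)| := le_abs_self _
    _ ≤ ‖g‖ * ‖π z‖ := g.le_opNorm _
    _ = ‖π z‖ := by rw [hg1, one_mul]
  have hgπz1 : g (π z) ≤ 1 := hgπz.trans hπz1
  have hfb : |f (y - π z)| ≤ 2 * ‖f‖ := by
    calc |f (y - π z)| ≤ ‖f‖ * ‖y - π z‖ := f.le_opNorm _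
    _ ≤ ‖f‖ * 2 := by
        refine mul_le_mul_of_nonneg_left ?_ (norm_nonneg f)
        calc ‖y - π z‖ ≤ ‖y‖ + ‖π z‖ := norm_sub_le _ _
        _ ≤ 2 := by rw [hy]; linarith
    _ = 2 * ‖f‖ := by ring
  have hfb' := abs_le.mp hfb
  -- forcing: 1 - g (π z) ≤ δ
  have hkey : lr * (1 - g (π z)) ≤ δ + 2 * ‖f‖ := by linarith
  have hlrδ : lr * δ = δ + 2 * ‖f‖ := div_mul_cancel₀ _ hδpos.ne'
  have hgδ : 1 - g (π z) ≤ δ := by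
    by_contra hcon
    push_neg at hcon
    have : lr * δ < lr * (1 - g (π z)) := by
      exact (mul_lt_mul_iff_right₀ hlrpos).mpr hcon
    linarith
  -- one-sided f bound
  have hfδ : f (y - π z) ≤ δ := by
    have h0 : 0 ≤ lr * (1 - g (π z)) := mul_nonneg hlrpos.le (by linarith)
    linarith
  -- the part of z outside J(X₁) is small
  have hz2 : ‖z - J (π z)‖ ≤ δ := by linarith
  -- T bound
  have hTJ : ‖T (J (y - π z))‖ ≤ δ + ‖T‖ * δ := by
    have hdec : J (y - π z) = (J y - z) + (z - J (π z)) := by rw [map_sub]; abel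
    calc ‖T (J (y - π z))‖ = ‖T (J y - z) + T (z - J (π z))‖ := by rw [hdec, map_add]
    _ ≤ ‖T (J y - z)‖ + ‖T (z - J (π z))‖ := norm_add_le _ _
    _ ≤ δ + ‖T‖ * δ := by
        refine add_le_add hTz ?_
        calc ‖T (z - J (π z))‖ ≤ ‖T‖ * ‖z - J (π z)‖ := T.le_opNorm _
        _ ≤ ‖T‖ * δ := mul_le_mul_of_nonneg_left hz2 (norm_nonneg T)
  exact ⟨z, hz1, hzx, hgδ, hz2, hfδ, hTJ⟩

set_option maxHeartbeats 1000000 in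
/-- The main abstract lemma: if `T` is narrow on `X` and `X₁` embeds isometrically into
`X` via `J` with an ℓ¹-splitting projection `π`, then `T ∘ J` is narrow. -/
lemma isNarrow_comp (T : X →L[ℝ] Y) (J : X₁ →L[ℝ] X) (π : X →L[ℝ] X₁)
    (hJ : ∀ a, ‖J a‖ = ‖a‖) (hπJ : ∀ a, π (J a) = a)
    (hsplit : ∀ u, ‖u‖ = ‖π u‖ + ‖u - J (π u)‖)
    (hT : IsNarrow T) : IsNarrow (T.comp J) := by
  intro x y hx hy f ε hε
  -- choice of δ
  set D : ℝ := 9 + 2 * ‖T‖ + ‖f‖ with hD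
  have hD9 : (9 : ℝ) ≤ D := by
    have := norm_nonneg T; have := norm_nonneg f; linarith
  have hDpos : 0 < D := by linarith
  set δ : ℝ := min ε 1 / D with hδ
  have hminpos : 0 < min ε 1 := lt_min hε one_pos
  have hδpos : 0 < δ := div_pos hminpos hDpos
  have hδD : δ * D = min ε 1 := div_mul_cancel₀ _ hDpos.ne'
  have hδ19 : δ ≤ 1 / 9 := by
    rw [hδ, div_le_div_iff₀ hDpos (by norm_num)]
    calc min ε 1 * 9 ≤ 1 * 9 := by
          refine mul_le_mul_of_nonneg_right (min_le_right _ _) (by norm_num)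
    _ ≤ 1 * D := by linarith
  have hδε : 9 * δ ≤ ε := by
    calc 9 * δ ≤ D * δ := mul_le_mul_of_nonneg_right hD9 hδpos.le
    _ = min ε 1 := by rw [mul_comm]; exact hδD
    _ ≤ ε := min_le_left _ _
  have hδε2 : (2 + 2 * ‖T‖ + ‖f‖) * δ ≤ ε := by
    calc (2 + 2 * ‖T‖ + ‖f‖) * δ ≤ D * δ := by
          refine mul_le_mul_of_nonneg_right (by rw [hD]; linarith) hδpos.le
    _ = min ε 1 := by rw [mul_comm]; exact hδD
    _ ≤ ε := min_le_left _ _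
  -- a norming functional for y
  have hy0 : y ≠ 0 := by
    intro h; rw [h, norm_zero] at hy; norm_num at hy
  obtain ⟨g, hg1, hgy'⟩ := exists_dual_vector ℝ y (norm_ne_zero_iff.mpr hy0)
  have hgy : g y = 1 := by rw [hy] at hgy'; exact_mod_cast hgy'
  -- Application A
  have hJx : ‖J x‖ = 1 := by rw [hJ, hx]
  obtain ⟨z, hz1, hzx, hgz, hz2, hfz, hTz⟩ :=
    narrow_step T J π hJ hπJ hsplit hT (J x) hJx y hy g hg1 hgy f δ hδpos
  set r : ℝ := ‖J x + z‖ with hr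
  have hr1 : 2 - δ ≤ r := hzx
  have hrpos : 0 < r := by linarith [hδ19]
  set x' : X := r⁻¹ • (J x + z) with hx'
  have hx'1 : ‖x'‖ = 1 := by
    rw [hx', norm_smul, norm_inv, Real.norm_eq_abs, abs_of_pos hrpos, ← hr,
      inv_mul_cancel₀ hrpos.ne']
  -- Application B (with -f)
  obtain ⟨z', hz'1, hz'x, hgz', hz'2, hfz', hTz'⟩ :=
    narrow_step T J π hJ hπJ hsplit hT x' hx'1 y hy g hg1 hgy (-f) δ hδpos
  have hfz'' : -δ ≤ f (y - π z') := by
    have : (-f) (y - π z') = -(f (y - π z')) := by simp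
    rw [this] at hfz'; linarith
  -- the norming functional h of x' + z'
  have hu : 2 - δ ≤ ‖x' + z'‖ := hz'x
  have hu0 : x' + z' ≠ 0 := by
    intro hcon
    rw [hcon, norm_zero] at hu; linarith [hδ19]
  obtain ⟨h, hh1, hhu'⟩ := exists_dual_vector ℝ (x' + z') (norm_ne_zero_iff.mpr hu0)
  have hhu : h (x' + z') = ‖x' + z'‖ := by exact_mod_cast hhu'
  have habs : ∀ u : X, h u ≤ ‖u‖ := fun u => by
    calc h u ≤ |h u| := le_abs_self _
    _ ≤ ‖h‖ * ‖u‖ := h.le_opNorm _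
    _ = ‖u‖ := by rw [hh1, one_mul]
  have hhsum : h x' + h z' = ‖x' + z'‖ := by rw [← map_add, hhu]
  have hhx' : 1 - δ ≤ h x' := by
    have := habs z'; rw [hz'1] at this; linarith
  have hhz' : 1 - δ ≤ h z' := by
    have := habs x'; rw [hx'1] at this; linarith
  have hhJxz : h (J x + z) = r * h x' := by
    have : h x' = r⁻¹ * h (J x + z) := by rw [hx', map_smul, smul_eq_mul]
    rw [this]; field_simp
  have hlow : 2 - 3 * δ ≤ h (J x + z) := by
    rw [hhJxz]
    have h1 : (2 - δ) * (1 - δ) ≤ r * h x' := by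
      have hδ1 : (0:ℝ) ≤ 1 - δ := by linarith [hδ19]
      have := mul_le_mul hr1 hhx' hδ1 (by linarith : (0:ℝ) ≤ r)
      linarith [this]
    have h2 : 2 - 3 * δ ≤ (2 - δ) * (1 - δ) := by
      have := sq_nonneg δ
      linarith only [this]
    linarith only [h1, h2]
  have hhJxzsum : h (J x) + h z = h (J x + z) := by rw [← map_add]
  have hhJx : 1 - 3 * δ ≤ h (J x) := by
    have := habs z; rw [hz1] at this; linarith
  have hhz : 1 - 3 * δ ≤ h z := by
    have := habs (J x); rw [hJx] at this; linarith
  -- selection of the convex combination parameter t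
  set a : ℝ := f (y - π z') with ha
  set b : ℝ := f (y - π z) with hb
  obtain ⟨t, ht0, ht1, htf⟩ : ∃ t : ℝ, 0 ≤ t ∧ t ≤ 1 ∧ |t * b + (1 - t) * a| ≤ δ := by
    by_cases hc : a ≤ δ
    · refine ⟨0, le_refl _, zero_le_one, ?_⟩
      rw [show (0:ℝ) * b + (1 - 0) * a = a by ring, abs_le]
      exact ⟨hfz'', hc⟩
    · push_neg at hc
      have hab : 0 < a - b := by linarith
      refine ⟨(a - δ) / (a - b), div_nonneg (by linarith) hab.le, ?_, ?_⟩
      · rw [div_le_one hab]; linarith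
      · have hmul : (a - δ) / (a - b) * (a - b) = a - δ := div_mul_cancel₀ _ hab.ne'
        have : (a - δ) / (a - b) * b + (1 - (a - δ) / (a - b)) * a
            = a - (a - δ) / (a - b) * (a - b) := by ring
        rw [this, hmul]
        simp [abs_of_nonneg hδpos.le]
  set v : X₁ := t • π z + (1 - t) • π z' with hv
  have ht1' : (0:ℝ) ≤ 1 - t := by linarith
  have hfyv : f (y - v) = t * b + (1 - t) * a := by
    rw [hv, ha, hb]
    simp only [map_sub, map_add, map_smul, smul_eq_mul]
    ring
  have hfv : |f (y - v)| ≤ δ := by rw [hfyv]; exact htf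
  have hgv : 1 - δ ≤ g v := by
    have h1 : t * (1 - δ) ≤ t * g (π z) :=
      mul_le_mul_of_nonneg_left (by linarith) ht0
    have h2 : (1 - t) * (1 - δ) ≤ (1 - t) * g (π z') :=
      mul_le_mul_of_nonneg_left (by linarith) ht1'
    have : g v = t * g (π z) + (1 - t) * g (π z') := by
      rw [hv]; simp [map_add, map_smul, smul_eq_mul]
    rw [this]; linarith only [h1, h2]
  have hπz1 : ‖π z‖ ≤ 1 := by
    have h1 := hsplit z; rw [hz1] at h1
    have := norm_nonneg (z - J (π z)); linarith
  have hπz'1 : ‖π z'‖ ≤ 1 := by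
    have h1 := hsplit z'; rw [hz'1] at h1
    have := norm_nonneg (z' - J (π z')); linarith
  have hv1 : ‖v‖ ≤ 1 := by
    calc ‖v‖ ≤ ‖t • π z‖ + ‖(1 - t) • π z'‖ := norm_add_le _ _
    _ = t * ‖π z‖ + (1 - t) * ‖π z'‖ := by
        rw [norm_smul, norm_smul, Real.norm_eq_abs, Real.norm_eq_abs,
          abs_of_nonneg ht0, abs_of_nonneg ht1']
    _ ≤ t * 1 + (1 - t) * 1 := add_le_add
        (mul_le_mul_of_nonneg_left hπz1 ht0)
        (mul_le_mul_of_nonneg_left hπz'1 ht1')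
    _ = 1 := by ring
  have hvlow : 1 - δ ≤ ‖v‖ := by
    have : g v ≤ ‖v‖ := by
      calc g v ≤ |g v| := le_abs_self _
      _ ≤ ‖g‖ * ‖v‖ := g.le_opNorm _
      _ = ‖v‖ := by rw [hg1, one_mul]
    linarith
  have hvpos : 0 < ‖v‖ := by linarith [hδ19]
  -- the combination w in X and the lower bound on ‖x + v‖
  set w : X := t • z + (1 - t) • z' with hw
  have hπw : π w = v := by rw [hw, hv]; simp [map_add, map_smul]
  have hhw : 2 - 7 * δ ≤ h (J x + w) := by
    have hexp : h (J x + w) = h (J x) + t * h z + (1 - t) * h z' := by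
      rw [hw]; simp [map_add, map_smul, smul_eq_mul]; ring
    have h1 : t * (1 - 3 * δ) ≤ t * h z := mul_le_mul_of_nonneg_left hhz ht0
    have h2 : (1 - t) * (1 - δ) ≤ (1 - t) * h z' := mul_le_mul_of_nonneg_left hhz' ht1'
    have h3 : t * δ ≤ δ := by
      have := mul_le_mul_of_nonneg_right ht1 hδpos.le
      linarith only [this]
    rw [hexp]; linarith only [hhJx, h1, h2, h3, hδpos]
  have hxw : 2 - 7 * δ ≤ ‖J x + w‖ := le_trans hhw (habs _)
  have hwv : ‖w - J v‖ ≤ δ := by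
    have hdec : w - J v = t • (z - J (π z)) + (1 - t) • (z' - J (π z')) := by
      rw [hw, hv, map_add, map_smul, map_smul]
      module
    calc ‖w - J v‖ ≤ ‖t • (z - J (π z))‖ + ‖(1 - t) • (z' - J (π z'))‖ := by
          rw [hdec]; exact norm_add_le _ _
    _ = t * ‖z - J (π z)‖ + (1 - t) * ‖z' - J (π z')‖ := by
        rw [norm_smul, norm_smul, Real.norm_eq_abs, Real.norm_eq_abs,
          abs_of_nonneg ht0, abs_of_nonneg ht1']
    _ ≤ t * δ + (1 - t) * δ := add_le_add
        (mul_le_mul_of_nonneg_left hz2 ht0)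
        (mul_le_mul_of_nonneg_left hz'2 ht1')
    _ = δ := by ring
  have hxv : 2 - 8 * δ ≤ ‖x + v‖ := by
    have hdec : J x + J v = (J x + w) - (w - J v) := by abel
    have : ‖J x + w‖ - ‖w - J v‖ ≤ ‖J x + J v‖ := by
      rw [hdec]; exact norm_sub_norm_le _ _
    have hJxv : ‖J x + J v‖ = ‖x + v‖ := by rw [← map_add, hJ]
    linarith
  -- normalize v
  set z'' : X₁ := ‖v‖⁻¹ • v with hz''
  have hz''1 : ‖z''‖ = 1 := by
    rw [hz'', norm_smul, norm_inv, Real.norm_eq_abs, abs_of_pos hvpos,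
      inv_mul_cancel₀ hvpos.ne']
  have hz''v : ‖z'' - v‖ ≤ δ := by
    have hdec : z'' - v = (‖v‖⁻¹ - 1) • v := by rw [hz'']; module
    have hinv1 : 1 ≤ ‖v‖⁻¹ := by
      rw [le_inv_comm₀ one_pos hvpos]; simpa using hv1
    rw [hdec, norm_smul, Real.norm_eq_abs, abs_of_nonneg (by linarith)]
    have : (‖v‖⁻¹ - 1) * ‖v‖ = 1 - ‖v‖ := by field_simp
    rw [this]; linarith
  refine ⟨z'', hz''1, ?_, ?_⟩
  · -- ‖x + z''‖ ≥ 2 - ε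
    have h5 : ‖x + v‖ ≤ ‖x + z''‖ + ‖v - z''‖ := by
      calc ‖x + v‖ = ‖(x + z'') + (v - z'')‖ := by
            rw [show (x + z'') + (v - z'') = x + v by abel]
      _ ≤ ‖x + z''‖ + ‖v - z''‖ := norm_add_le _ _
    have h6 : ‖v - z''‖ = ‖z'' - v‖ := norm_sub_rev _ _
    linarith
  · -- operator and functional bound
    have hTyv : ‖T (J (y - v))‖ ≤ δ + ‖T‖ * δ := by
      have hdec : y - v = t • (y - π z) + (1 - t) • (y - π z') := by
        rw [hv]; module
      have : T (J (y - v)) = t • T (J (y - π z)) + (1 - t) • T (J (y - π z')) := by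
        rw [hdec]; simp only [map_add, map_smul]
      rw [this]
      calc ‖t • T (J (y - π z)) + (1 - t) • T (J (y - π z'))‖
          ≤ ‖t • T (J (y - π z))‖ + ‖(1 - t) • T (J (y - π z'))‖ := norm_add_le _ _
      _ = t * ‖T (J (y - π z))‖ + (1 - t) * ‖T (J (y - π z'))‖ := by
          rw [norm_smul, norm_smul, Real.norm_eq_abs, Real.norm_eq_abs,
            abs_of_nonneg ht0, abs_of_nonneg ht1']
      _ ≤ t * (δ + ‖T‖ * δ) + (1 - t) * (δ + ‖T‖ * δ) := add_le_add
          (mul_le_mul_of_nonneg_left hTz ht0)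
          (mul_le_mul_of_nonneg_left hTz' ht1')
      _ = δ + ‖T‖ * δ := by ring
    have hTvz'' : ‖T (J (v - z''))‖ ≤ ‖T‖ * δ := by
      calc ‖T (J (v - z''))‖ ≤ ‖T‖ * ‖J (v - z'')‖ := T.le_opNorm _
      _ = ‖T‖ * ‖v - z''‖ := by rw [hJ]
      _ ≤ ‖T‖ * δ := by
          have : ‖v - z''‖ = ‖z'' - v‖ := norm_sub_rev _ _
          rw [this]
          exact mul_le_mul_of_nonneg_left hz''v (norm_nonneg T)
    have hTfinal : ‖(T.comp J) (y - z'')‖ ≤ δ + 2 * (‖T‖ * δ) := by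
      have hdec : y - z'' = (y - v) + (v - z'') := by abel
      calc ‖(T.comp J) (y - z'')‖ = ‖T (J (y - v)) + T (J (v - z''))‖ := by
            rw [ContinuousLinearMap.comp_apply, hdec, map_add, map_add]
      _ ≤ ‖T (J (y - v))‖ + ‖T (J (v - z''))‖ := norm_add_le _ _
      _ ≤ (δ + ‖T‖ * δ) + ‖T‖ * δ := add_le_add hTyv hTvz''
      _ = δ + 2 * (‖T‖ * δ) := by ring
    have hffinal : |f (y - z'')| ≤ δ + ‖f‖ * δ := by
      have hdec : y - z'' = (y - v) + (v - z'') := by abel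
      calc |f (y - z'')| = |f (y - v) + f (v - z'')| := by rw [hdec, map_add]
      _ ≤ |f (y - v)| + |f (v - z'')| := abs_add_le _ _
      _ ≤ δ + ‖f‖ * δ := by
          refine add_le_add hfv ?_
          calc |f (v - z'')| ≤ ‖f‖ * ‖v - z''‖ := f.le_opNorm _
          _ ≤ ‖f‖ * δ := by
              rw [norm_sub_rev]
              exact mul_le_mul_of_nonneg_left hz''v (norm_nonneg f)
    calc ‖(T.comp J) (y - z'')‖ + |f (y - z'')| ≤ (δ + 2 * (‖T‖ * δ)) + (δ + ‖f‖ * δ) :=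
          add_le_add hTfinal hffinal
    _ = (2 + 2 * ‖T‖ + ‖f‖) * δ := by ring
    _ ≤ ε := hδε2

end Aux

theorem restrictions_narrow_of_oneSum
    {X₁ X₂ Y : Type*}
    [NormedAddCommGroup X₁] [NormedSpace ℝ X₁] [CompleteSpace X₁]
    [NormedAddCommGroup X₂] [NormedSpace ℝ X₂] [CompleteSpace X₂]
    [NormedAddCommGroup Y] [NormedSpace ℝ Y] [CompleteSpace Y]
    (T : WithLp 1 (X₁ × X₂) →L[ℝ] Y)
    (T₁ : X₁ →L[ℝ] Y) (T₂ : X₂ →L[ℝ] Y)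
    (hT₁ : ∀ x₁ : X₁, T₁ x₁ = T ((WithLp.prodContinuousLinearEquiv 1 ℝ X₁ X₂).symm (x₁, 0)))
    (hT₂ : ∀ x₂ : X₂, T₂ x₂ = T ((WithLp.prodContinuousLinearEquiv 1 ℝ X₁ X₂).symm (0, x₂)))
    (hT : IsNarrow T) :
    IsNarrow T₁ ∧ IsNarrow T₂ := by
  set e := WithLp.prodContinuousLinearEquiv 1 ℝ X₁ X₂ with he
  have hnorm : ∀ u : WithLp 1 (X₁ × X₂), ‖u‖ = ‖u.fst‖ + ‖u.snd‖ := by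
    intro u
    rw [WithLp.prod_norm_eq_add (by norm_num)]
    norm_num
  constructor
  · -- T₁ is narrow
    set J : X₁ →L[ℝ] WithLp 1 (X₁ × X₂) :=
      (e.symm : (X₁ × X₂) →L[ℝ] WithLp 1 (X₁ × X₂)).comp (ContinuousLinearMap.inl ℝ X₁ X₂)
        with hJdef
    set π : WithLp 1 (X₁ × X₂) →L[ℝ] X₁ :=
      (ContinuousLinearMap.fst ℝ X₁ X₂).comp (e : WithLp 1 (X₁ × X₂) →L[ℝ] (X₁ × X₂))
        with hπdef
    have hJapp : ∀ a : X₁, J a = e.symm (a, 0) := fun a => rfl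
    have hπapp : ∀ u, π u = (e u).1 := fun u => rfl
    have hJfst : ∀ a : X₁, (J a).fst = a := fun a => rfl
    have hJsnd : ∀ a : X₁, (J a).snd = 0 := fun a => rfl
    have hJ : ∀ a, ‖J a‖ = ‖a‖ := by
      intro a; rw [hnorm, hJfst, hJsnd, norm_zero, add_zero]
    have hπJ : ∀ a, π (J a) = a := fun a => rfl
    have hsplit : ∀ u, ‖u‖ = ‖π u‖ + ‖u - J (π u)‖ := by
      intro u
      have h1 : (u - J (π u)).fst = 0 := by
        rw [WithLp.sub_fst, hJfst]
        have : π u = u.fst := rfl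
        rw [this, sub_self]
      have h2 : (u - J (π u)).snd = u.snd := by
        rw [WithLp.sub_snd, hJsnd, sub_zero]
      rw [hnorm u, hnorm (u - J (π u)), h1, h2, norm_zero, zero_add]
      rfl
    have hcomp : T₁ = T.comp J := by
      ext a
      rw [hT₁ a]
      rfl
    rw [hcomp]
    exact isNarrow_comp T J π hJ hπJ hsplit hT
  · -- T₂ is narrow
    set J : X₂ →L[ℝ] WithLp 1 (X₁ × X₂) :=
      (e.symm : (X₁ × X₂) →L[ℝ] WithLp 1 (X₁ × X₂)).comp (ContinuousLinearMap.inr ℝ X₁ X₂)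
        with hJdef
    set π : WithLp 1 (X₁ × X₂) →L[ℝ] X₂ :=
      (ContinuousLinearMap.snd ℝ X₁ X₂).comp (e : WithLp 1 (X₁ × X₂) →L[ℝ] (X₁ × X₂))
        with hπdef
    have hJfst : ∀ a : X₂, (J a).fst = 0 := fun a => rfl
    have hJsnd : ∀ a : X₂, (J a).snd = a := fun a => rfl
    have hJ : ∀ a, ‖J a‖ = ‖a‖ := by
      intro a; rw [hnorm, hJfst, hJsnd, norm_zero, zero_add]
    have hπJ : ∀ a, π (J a) = a := fun a => rfl
    have hsplit : ∀ u, ‖u‖ = ‖π u‖ + ‖u - J (π u)‖ := by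
      intro u
      have h1 : (u - J (π u)).snd = 0 := by
        rw [WithLp.sub_snd, hJsnd]
        have : π u = u.snd := rfl
        rw [this, sub_self]
      have h2 : (u - J (π u)).fst = u.fst := by
        rw [WithLp.sub_fst, hJfst, sub_zero]
      rw [hnorm u, hnorm (u - J (π u)), h1, h2, norm_zero, add_zero]
      ring_nf
      rfl
    have hcomp : T₂ = T.comp J := by
      ext a
      rw [hT₂ a]
      rfl
    rw [hcomp]
    exact isNarrow_comp T J π hJ hπJ hsplit hT
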